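/- For every a, b ∈ ℤ/4ℤ, the Gau map φ is a bijection from R_{a+bw} onto Σ = Fin 4 × Fin 4, and for every x ∈ R_{a+bw} it satisfies φ(3x) = (φ(x).2, φ(x).1) (reversal of the DNA pair) and φ(x + (2+2w)) = (3 − φ(x).1, 3 − φ(x).2) (Watson–Crick complement of the DNA pair). -/

import Mathlib

open Polynomial

/-- The base ring ℤ/4ℤ. -/
abbrev Z4 := ZMod 4

/-- The polynomial X² − (a + bX) over ℤ/4ℤ. -/
noncomputable def wPoly (a b : Z4) : Z4[X] := X ^ 2 - (C b * X + C a)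

/-- The ring R_{a+bw} = (ℤ/4ℤ)[X]/(X² − (a + bX)); every element is uniquely
x₀ + x₁·w with x₀, x₁ ∈ ℤ/4ℤ, and w² = a + b·w. -/
abbrev Rw (a b : Z4) : Type := AdjoinRoot (wPoly a b)

/-- The element w of R_{a+bw}. -/
noncomputable def ww (a b : Z4) : Rw a b := AdjoinRoot.root _

instance (a b : Z4) : Nonempty (Rw a b) := ⟨0⟩

/-- The Gau map expressed on coordinates:  ψ(x₀, x₁) is the DNA pair (in Fin 4 × Fin 4,
with A,G,C,T encoded as 0,1,2,3) assigned to the ring element x₀ + x₁·w. -/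
def psi (p : Z4 × Z4) : Fin 4 × Fin 4 :=
  match p.1.val, p.2.val with
  | 0, 0 => (3, 3)
  | 1, 0 => (0, 1)
  | 2, 0 => (2, 2)
  | 3, 0 => (1, 0)
  | 0, 1 => (0, 2)
  | 1, 1 => (0, 3)
  | 2, 1 => (1, 3)
  | 3, 1 => (1, 2)
  | 0, 2 => (1, 1)
  | 1, 2 => (2, 3)
  | 2, 2 => (0, 0)
  | 3, 2 => (3, 2)
  | 0, 3 => (2, 0)
  | 1, 3 => (2, 1)
  | 2, 3 => (3, 1)
  | _, _ => (3, 0)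

/-- `phi` is a Gau map on R_{a+bw}: on the element x₀ + x₁·w it takes the value
prescribed by the table ψ. -/
def IsGauMap (a b : Z4) (phi : Rw a b → Fin 4 × Fin 4) : Prop :=
  ∀ x₀ x₁ : Z4,
    phi (algebraMap Z4 (Rw a b) x₀ + algebraMap Z4 (Rw a b) x₁ * ww a b) = psi (x₀, x₁)

/-- Coordinatewise extension Φ of a Gau map φ to vectors. -/
def PhiV (a b : Z4) (phi : Rw a b → Fin 4 × Fin 4) (n : ℕ) (x : Fin n → Rw a b) :
    Fin n → Fin 4 × Fin 4 :=
  fun j => phi (x j)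

/-- Inverse Φ⁻¹ of the coordinatewise extension of a Gau map. -/
noncomputable def PhiVinv (a b : Z4) (phi : Rw a b → Fin 4 × Fin 4) (n : ℕ)
    (y : Fin n → Fin 4 × Fin 4) : Fin n → Rw a b :=
  fun j => Function.invFun phi (y j)

/-- DNA-string reversal y ↦ y^R on Σⁿ: read the length-2n DNA string backwards,
i.e. reverse the order of the pairs and swap the two entries of each pair. -/
def dnaRev (n : ℕ) (y : Fin n → Fin 4 × Fin 4) : Fin n → Fin 4 × Fin 4 :=
  fun j => ((y j.rev).2, (y j.rev).1)

/-- Watson–Crick complement y ↦ y^C on Σⁿ. -/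
def dnaCompl (n : ℕ) (y : Fin n → Fin 4 × Fin 4) : Fin n → Fin 4 × Fin 4 :=
  fun j => (3 - (y j).1, 3 - (y j).2)

/-- Vector reversal g ↦ g^r on Rⁿ. -/
def vecRev {α : Type*} (n : ℕ) (x : Fin n → α) : Fin n → α :=
  fun j => x j.rev

instance : Nontrivial Z4 := ⟨0, 1, by decide⟩

lemma wPoly_monic (a b : Z4) : (wPoly a b).Monic := by
  have h : (C b * X + C a).degree < ((2 : ℕ) : WithBot ℕ) :=
    lt_of_le_of_lt Polynomial.degree_linear_le (by norm_num)
  simpa [wPoly] using Polynomial.monic_X_pow_sub h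

lemma wPoly_degree (a b : Z4) : (wPoly a b).degree = 2 := by
  have h1 : (C b * X + C a).degree < (X ^ 2 : Z4[X]).degree := by
    rw [Polynomial.degree_X_pow]
    exact lt_of_le_of_lt Polynomial.degree_linear_le (by norm_num)
  rw [wPoly, Polynomial.degree_sub_eq_left_of_degree_lt h1, Polynomial.degree_X_pow]
  rfl

lemma rep_exists (a b : Z4) (x : Rw a b) :
    ∃ x₀ x₁ : Z4, x = algebraMap Z4 (Rw a b) x₀ + algebraMap Z4 (Rw a b) x₁ * ww a b := by
  obtain ⟨p, rfl⟩ := AdjoinRoot.mk_surjective x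
  set f := wPoly a b
  refine ⟨(p %ₘ f).coeff 0, (p %ₘ f).coeff 1, ?_⟩
  have hmk : AdjoinRoot.mk f p = AdjoinRoot.mk f (p %ₘ f) := by
    conv_lhs => rw [← Polynomial.modByMonic_add_div p f]
    rw [map_add, map_mul, AdjoinRoot.mk_self, zero_mul, add_zero]
  have hdeg : (p %ₘ f).degree ≤ 1 := by
    have := Polynomial.degree_modByMonic_lt p (wPoly_monic a b)
    rw [wPoly_degree a b] at this
    exact Order.le_of_lt_succ (by exact_mod_cast this)
  have hq := Polynomial.eq_X_add_C_of_degree_le_one hdeg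
  rw [hmk]
  conv_lhs => rw [hq]
  rw [map_add, map_mul, AdjoinRoot.mk_X, AdjoinRoot.mk_C, AdjoinRoot.mk_C]
  rw [ww, AdjoinRoot.algebraMap_eq]
  ring

lemma rep_unique (a b : Z4) (x₀ x₁ y₀ y₁ : Z4)
    (h : algebraMap Z4 (Rw a b) x₀ + algebraMap Z4 (Rw a b) x₁ * ww a b =
      algebraMap Z4 (Rw a b) y₀ + algebraMap Z4 (Rw a b) y₁ * ww a b) :
    x₀ = y₀ ∧ x₁ = y₁ := by
  set f := wPoly a b
  have key : ∀ u v : Z4, AdjoinRoot.mk f (C v * X + C u) =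
      algebraMap Z4 (Rw a b) u + algebraMap Z4 (Rw a b) v * ww a b := by
    intro u v
    rw [map_add, map_mul, AdjoinRoot.mk_X, AdjoinRoot.mk_C, AdjoinRoot.mk_C, ww,
      AdjoinRoot.algebraMap_eq]
    ring
  have h' : AdjoinRoot.mk f (C x₁ * X + C x₀) = AdjoinRoot.mk f (C y₁ * X + C y₀) := by
    rw [key, key]; exact h
  have hdvd : f ∣ (C x₁ * X + C x₀) - (C y₁ * X + C y₀) := by
    rwa [← AdjoinRoot.mk_eq_mk]
  have hlt : ((C x₁ * X + C x₀) - (C y₁ * X + C y₀)).degree < f.degree := by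
    rw [wPoly_degree a b]
    refine lt_of_le_of_lt ?_ (by norm_num : (1 : WithBot ℕ) < 2)
    exact le_trans (Polynomial.degree_sub_le _ _)
      (max_le Polynomial.degree_linear_le Polynomial.degree_linear_le)
  have hz : (C x₁ * X + C x₀) - (C y₁ * X + C y₀) = 0 := by
    have hm := (Polynomial.modByMonic_eq_zero_iff_dvd (wPoly_monic a b)).mpr hdvd
    rwa [(Polynomial.modByMonic_eq_self_iff (wPoly_monic a b)).mpr hlt] at hm
  have heq : (C x₁ * X + C x₀ : Z4[X]) = C y₁ * X + C y₀ := sub_eq_zero.mp hz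
  constructor
  · have := congrArg (fun p => Polynomial.coeff p 0) heq
    simpa using this
  · have := congrArg (fun p => Polynomial.coeff p 1) heq
    simpa using this

lemma psi_bij : Function.Bijective psi := by decide

lemma psi_three : ∀ p q : Z4, psi (3 * p, 3 * q) = ((psi (p, q)).2, (psi (p, q)).1) := by decide

lemma psi_compl : ∀ p q : Z4,
    psi (p + 2, q + 2) = (3 - (psi (p, q)).1, 3 - (psi (p, q)).2) := by decide

/-- for every a, b ∈ ℤ/4ℤ the Gau map φ is a bijection from R_{a+bw} onto
Σ = Fin 4 × Fin 4, and it satisfies φ(3x) = (φ(x).2, φ(x).1) (reversal of the DNA pair)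
and φ(x + (2+2w)) = (3 − φ(x).1, 3 − φ(x).2) (Watson–Crick complement of the DNA pair). -/
theorem gauMap_bijective_rev_compl (a b : Z4) (phi : Rw a b → Fin 4 × Fin 4)
    (hphi : IsGauMap a b phi) :
    Function.Bijective phi ∧
    (∀ x : Rw a b, phi (3 * x) = ((phi x).2, (phi x).1)) ∧
    (∀ x : Rw a b, phi (x + (2 + 2 * ww a b)) = (3 - (phi x).1, 3 - (phi x).2)) := by
  refine ⟨⟨?_, ?_⟩, ?_, ?_⟩
  · intro x y hxy
    obtain ⟨x₀, x₁, rfl⟩ := rep_exists a b x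
    obtain ⟨y₀, y₁, rfl⟩ := rep_exists a b y
    rw [hphi, hphi] at hxy
    have := psi_bij.1 hxy
    obtain ⟨h0, h1⟩ := Prod.mk.inj this
    rw [h0, h1]
  · intro s
    obtain ⟨⟨x₀, x₁⟩, hp⟩ := psi_bij.2 s
    exact ⟨_, (hphi x₀ x₁).trans hp⟩
  · intro x
    obtain ⟨x₀, x₁, rfl⟩ := rep_exists a b x
    have h3 : (3 : Rw a b) = algebraMap Z4 (Rw a b) 3 := (map_ofNat _ 3).symm
    have hx : (3 : Rw a b) * (algebraMap Z4 (Rw a b) x₀ + algebraMap Z4 (Rw a b) x₁ * ww a b)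
        = algebraMap Z4 (Rw a b) (3 * x₀) + algebraMap Z4 (Rw a b) (3 * x₁) * ww a b := by
      rw [h3, map_mul, map_mul]; ring
    rw [hx, hphi, hphi]
    exact psi_three x₀ x₁
  · intro x
    obtain ⟨x₀, x₁, rfl⟩ := rep_exists a b x
    have h2 : (2 : Rw a b) = algebraMap Z4 (Rw a b) 2 := (map_ofNat _ 2).symm
    have hx : (algebraMap Z4 (Rw a b) x₀ + algebraMap Z4 (Rw a b) x₁ * ww a b)
          + (2 + 2 * ww a b)
        = algebraMap Z4 (Rw a b) (x₀ + 2) + algebraMap Z4 (Rw a b) (x₁ + 2) * ww a b := by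
      rw [h2, map_add, map_add]; ring
    rw [hx, hphi, hphi]
    exact psi_compl x₀ x₁
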